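/- Fix an integer K ≥ 2, α : Fin K → ℝ with α_i > 0 for all i, set α₀ = Σ_i α_i, and let y : Fin K → ℝ be a fixed vector with Σ_i y_i = 1. Let M be the matrix with entries M_{ij} = δ_{ij}·ψ¹(α_i) − ψ¹(α₀) (the Fisher Information Matrix of the Dirichlet distribution). Then the expected Fisher-information-weighted squared error satisfies ∫_T f_α(x)·Σ_{i,j} (y_i − p_i(x))·M_{ij}·(y_j − p_j(x)) dx = Σ_{j=0}^{K-1} [ (y_j − α_j/α₀)² + α_j·(α₀ − α_j)/(α₀²·(α₀+1)) ]·ψ¹(α_j). -/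

import Mathlib

open MeasureTheory Real

/-- The coordinates of a point on the probability simplex parameterized by
`x ∈ ℝ^{K-1}`: `p_i(x) = x_i` for `i < K − 1` and `p_{K-1}(x) = 1 − Σ_j x_j`. -/
noncomputable def dirP (K : ℕ) (x : Fin (K - 1) → ℝ) (i : Fin K) : ℝ :=
  if h : (i : ℕ) < K - 1 then x ⟨i, h⟩ else 1 - ∑ j, x j

/-- The open parameter domain `T = {x : x_i > 0 for all i and Σ_i x_i < 1} ⊆ ℝ^{K−1}`. -/
def dirT (K : ℕ) : Set (Fin (K - 1) → ℝ) :=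
  {x | (∀ i, 0 < x i) ∧ ∑ i, x i < 1}

/-- The Dirichlet density `f_α(x) = (Γ(α₀)/∏_i Γ(α_i)) · ∏_i p_i(x)^{α_i − 1}`. -/
noncomputable def dirDensity (K : ℕ) (α : Fin K → ℝ) (x : Fin (K - 1) → ℝ) : ℝ :=
  (Real.Gamma (∑ i, α i) / ∏ i, Real.Gamma (α i)) * ∏ i, dirP K x i ^ (α i - 1)

/-- The digamma function `ψ`: the derivative of `log Γ`. -/
noncomputable def digamma (x : ℝ) : ℝ :=
  deriv (fun y : ℝ => Real.log (Real.Gamma y)) x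

/-- The trigamma function `ψ¹`: the second derivative of `log Γ`. -/
noncomputable def trigamma (x : ℝ) : ℝ :=
  deriv (deriv fun y : ℝ => Real.log (Real.Gamma y)) x


section DirichletAuxProof

open intervalIntegral

/-- Integrability of the scaled beta integrand on `Ioc 0 s`. -/
lemma betaIntegrand_integrableOn {a b s : ℝ} (ha : 0 < a) (hb : 0 < b) (hs : 0 < s) :
    IntegrableOn (fun t : ℝ => t ^ (a - 1) * (s - t) ^ (b - 1)) (Set.Ioc 0 s) := by
  have h2 : (0:ℝ) < s/2 := by linarith
  have hsplit : Set.Ioc (0:ℝ) s = Set.Ioc 0 (s/2) ∪ Set.Ioc (s/2) s := by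
    rw [Set.Ioc_union_Ioc_eq_Ioc (by linarith) (by linarith)]
  rw [hsplit]
  apply IntegrableOn.union
  · -- near 0 : t^(a-1) integrable, (s-t)^(b-1) continuous on [0, s/2]
    have h1 : IntervalIntegrable (fun t : ℝ => t ^ (a - 1)) volume 0 (s/2) :=
      intervalIntegrable_rpow' (by linarith)
    have h2' : ContinuousOn (fun t : ℝ => (s - t) ^ (b - 1)) (Set.uIcc 0 (s/2)) := by
      apply ContinuousOn.rpow_const
      · fun_prop
      · intro t ht
        left
        rw [Set.uIcc_of_le (by linarith)] at ht
        have := ht.2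
        intro h
        nlinarith [sub_eq_zero.mp h]
    have := h1.mul_continuousOn h2'
    rwa [intervalIntegrable_iff_integrableOn_Ioc_of_le (by linarith)] at this
  · -- near s : (s-t)^(b-1) integrable, t^(a-1) continuous on [s/2, s]
    have h1 : IntervalIntegrable (fun t : ℝ => t ^ (b - 1)) volume 0 (s/2) :=
      intervalIntegrable_rpow' (by linarith)
    have h1' : IntervalIntegrable (fun t : ℝ => (s - t) ^ (b - 1)) volume (s - 0) (s - s/2) :=
      h1.comp_sub_left s
    have h1'' : IntervalIntegrable (fun t : ℝ => (s - t) ^ (b - 1)) volume (s/2) s := by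
      have := h1'.symm
      rw [show s - s/2 = s/2 by ring, show s - 0 = s by ring] at this
      exact this
    have h2' : ContinuousOn (fun t : ℝ => t ^ (a - 1)) (Set.uIcc (s/2) s) := by
      apply ContinuousOn.rpow_const continuousOn_id
      intro t ht
      left
      rw [Set.uIcc_of_le (by linarith)] at ht
      have h0 : 0 < t := lt_of_lt_of_le h2 ht.1
      exact ne_of_gt h0
    have := h1''.mul_continuousOn h2'
    rw [intervalIntegrable_iff_integrableOn_Ioc_of_le (by linarith)] at this
    exact this.congr_fun (fun t ht => by ring) measurableSet_Ioc

/-- Value of the scaled real beta integral. -/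
lemma betaIntegral_real_value {a b s : ℝ} (ha : 0 < a) (hb : 0 < b) (hs : 0 < s) :
    ∫ t in (0:ℝ)..s, t ^ (a - 1) * (s - t) ^ (b - 1)
      = s ^ (a + b - 1) * (Gamma a * Gamma b / Gamma (a + b)) := by
  have hGab : Gamma (a + b) ≠ 0 := (Real.Gamma_pos_of_pos (by linarith)).ne'
  have hbeta : Complex.betaIntegral a b
      = ((Gamma a * Gamma b / Gamma (a + b) : ℝ) : ℂ) := by
    have h := Complex.Gamma_mul_Gamma_eq_betaIntegral
      (s := (a:ℂ)) (t := (b:ℂ)) (by simpa using ha) (by simpa using hb)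
    rw [show ((a:ℂ) + b) = ((a + b : ℝ) : ℂ) by push_cast; ring, Complex.Gamma_ofReal,
      Complex.Gamma_ofReal, Complex.Gamma_ofReal] at h
    push_cast
    rw [eq_div_iff (by exact_mod_cast hGab)]
    linear_combination -h
  have hscaled := Complex.betaIntegral_scaled (a:ℂ) (b:ℂ) hs
  have hcong : ∀ t ∈ Set.Ioc (0:ℝ) s,
      ((t:ℂ)) ^ ((a:ℂ) - 1) * ((s:ℂ) - t) ^ ((b:ℂ) - 1)
        = ((t ^ (a - 1) * (s - t) ^ (b - 1) : ℝ) : ℂ) := by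
    intro t ht
    have e1 : ((a:ℂ) - 1) = ((a - 1 : ℝ) : ℂ) := by push_cast; ring
    have e2 : ((b:ℂ) - 1) = ((b - 1 : ℝ) : ℂ) := by push_cast; ring
    have e3 : ((s:ℂ) - t) = ((s - t : ℝ) : ℂ) := by push_cast; ring
    rw [e1, e2, e3, ← Complex.ofReal_cpow ht.1.le,
      ← Complex.ofReal_cpow (by linarith [ht.2] : (0:ℝ) ≤ s - t)]
    push_cast
    ring
  have hre : (∫ t in (0:ℝ)..s, ((t:ℂ)) ^ ((a:ℂ) - 1) * ((s:ℂ) - t) ^ ((b:ℂ) - 1))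
      = ((∫ t in (0:ℝ)..s, t ^ (a - 1) * (s - t) ^ (b - 1) : ℝ) : ℂ) := by
    rw [← intervalIntegral.integral_ofReal]
    apply intervalIntegral.integral_congr_ae
    filter_upwards with t ht
    rw [Set.uIoc_of_le hs.le] at ht
    exact hcong t ht
  have hfin : ((∫ t in (0:ℝ)..s, t ^ (a - 1) * (s - t) ^ (b - 1) : ℝ) : ℂ)
      = ((s ^ (a + b - 1) * (Gamma a * Gamma b / Gamma (a + b)) : ℝ) : ℂ) := by
    rw [← hre, hscaled, hbeta,
      show ((a:ℂ) + ↑b - 1) = ((a + b - 1 : ℝ) : ℂ) by push_cast; ring,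
      ← Complex.ofReal_cpow hs.le]
    push_cast
    ring
  exact_mod_cast hfin

/-- The scaled beta integral as a Lebesgue integral on `Ioo 0 s`. -/
lemma beta_lintegral {a b s : ℝ} (ha : 0 < a) (hb : 0 < b) (hs : 0 < s) :
    ∫⁻ t in Set.Ioo (0:ℝ) s, ENNReal.ofReal (t ^ (a - 1) * (s - t) ^ (b - 1))
      = ENNReal.ofReal (s ^ (a + b - 1) * (Gamma a * Gamma b / Gamma (a + b))) := by
  have hint : IntegrableOn (fun t : ℝ => t ^ (a - 1) * (s - t) ^ (b - 1)) (Set.Ioo 0 s) :=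
    (betaIntegrand_integrableOn ha hb hs).mono_set Set.Ioo_subset_Ioc_self
  have hnn : 0 ≤ᵐ[volume.restrict (Set.Ioo (0:ℝ) s)]
      fun t : ℝ => t ^ (a - 1) * (s - t) ^ (b - 1) := by
    refine (ae_restrict_iff' measurableSet_Ioo).mpr ?_
    filter_upwards with t ht
    exact mul_nonneg (Real.rpow_nonneg ht.1.le _)
      (Real.rpow_nonneg (by linarith [ht.2]) _)
  rw [← ofReal_integral_eq_lintegral_ofReal hint hnn]
  congr 1
  rw [Measure.restrict_congr_set Ioo_ae_eq_Ioc,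
    ← intervalIntegral.integral_of_le hs.le, betaIntegral_real_value ha hb hs]

lemma dirP_castSucc (n : ℕ) (x : Fin n → ℝ) (j : Fin n) :
    dirP (n+1) x (Fin.castSucc j) = x j := by
  rw [dirP, dif_pos (by simpa using j.isLt)]
  exact congrArg x (Fin.ext (by simp))

lemma dirP_last (n : ℕ) (x : Fin n → ℝ) :
    dirP (n+1) x (Fin.last n) = 1 - ∑ j, x j := by
  rw [dirP, dif_neg (by simp)]
  rfl

lemma measurable_dirP {K : ℕ} (i : Fin K) :
    Measurable fun x : Fin (K-1) → ℝ => dirP K x i := by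
  unfold dirP
  rcases Nat.lt_or_ge (i : ℕ) (K-1) with h | h
  · simp only [dif_pos h]
    exact measurable_pi_apply _
  · simp only [dif_neg (Nat.not_lt.mpr h)]
    exact (measurable_const.sub (Finset.measurable_sum _ fun j _ => measurable_pi_apply j))

lemma measurableSet_dirT (K : ℕ) : MeasurableSet (dirT K) := by
  have : dirT K = (⋂ i, {x : Fin (K-1) → ℝ | 0 < x i}) ∩ {x | ∑ i, x i < 1} := by
    ext x; simp [dirT, Set.mem_iInter]
  rw [this]
  exact (MeasurableSet.iInter fun i =>
      measurableSet_lt measurable_const (measurable_pi_apply i)).inter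
    (measurableSet_lt (Finset.measurable_sum _ fun j _ => measurable_pi_apply j)
      measurable_const)

lemma dirP_pos {n : ℕ} {x : Fin n → ℝ} (hx : x ∈ dirT (n+1)) (i : Fin (n+1)) :
    0 < dirP (n+1) x i := by
  induction i using Fin.lastCases with
  | last =>
    rw [dirP_last]
    have h2 : (∑ j : Fin n, x j) < 1 := hx.2
    linarith
  | cast j => rw [dirP_castSucc]; exact hx.1 j

lemma sum_snoc {n : ℕ} (z : Fin n → ℝ) (t : ℝ) :
    ∑ j, (Fin.snoc z t : Fin (n+1) → ℝ) j = (∑ j, z j) + t := by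
  rw [Fin.sum_univ_castSucc]
  simp

lemma snoc_mem_dirT_iff {n : ℕ} (z : Fin n → ℝ) (t : ℝ) :
    (Fin.snoc z t : Fin (n+1) → ℝ) ∈ dirT (n+2) ↔
      (z ∈ dirT (n+1) ∧ t ∈ Set.Ioo 0 (1 - ∑ j, z j)) := by
  have hforall : (∀ i : Fin (n+1), 0 < (Fin.snoc z t : Fin (n+1) → ℝ) i) ↔
      ((∀ j, 0 < z j) ∧ 0 < t) := by
    constructor
    · intro h
      refine ⟨fun j => ?_, ?_⟩
      · have := h (Fin.castSucc j); rwa [Fin.snoc_castSucc] at this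
      · have := h (Fin.last n); rwa [Fin.snoc_last] at this
    · intro h i
      induction i using Fin.lastCases with
      | last => rw [Fin.snoc_last]; exact h.2
      | cast j => rw [Fin.snoc_castSucc]; exact h.1 j
  constructor
  · rintro ⟨h1, h2⟩
    have h2' : (∑ j, z j) + t < 1 := by rw [← sum_snoc]; exact h2
    obtain ⟨hz, ht⟩ := hforall.mp h1
    refine ⟨⟨hz, ?_⟩, ⟨ht, by linarith⟩⟩
    show (∑ j : Fin n, z j) < 1
    linarith
  · rintro ⟨⟨hz, hs⟩, ht1, ht2⟩
    refine ⟨hforall.mpr ⟨hz, ht1⟩, ?_⟩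
    show (∑ j : Fin (n+1), (Fin.snoc z t : Fin (n+1) → ℝ) j) < 1
    rw [sum_snoc]
    linarith

lemma prod_dirP_snoc {n : ℕ} (β : Fin (n+2) → ℝ) (z : Fin n → ℝ) (t : ℝ) :
    ∏ i, dirP (n+2) (Fin.snoc z t) i ^ (β i - 1)
      = (∏ j, z j ^ (β (Fin.castSucc (Fin.castSucc j)) - 1))
        * (t ^ (β (Fin.castSucc (Fin.last n)) - 1)
          * ((1 - ∑ j, z j) - t) ^ (β (Fin.last (n+1)) - 1)) := by
  rw [Fin.prod_univ_castSucc]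
  have h1 : ∀ j : Fin (n+1), dirP (n+2) (Fin.snoc z t) (Fin.castSucc j)
      = (Fin.snoc z t : Fin (n+1) → ℝ) j :=
    fun j => dirP_castSucc (n+1) _ j
  simp only [h1]
  rw [Fin.prod_univ_castSucc]
  simp only [Fin.snoc_castSucc, Fin.snoc_last, dirP_last, sum_snoc, sub_eq_neg_add]
  ring

lemma dir_lintegral : ∀ (n : ℕ) (β : Fin (n+1) → ℝ), (∀ i, 0 < β i) →
    ∫⁻ x in dirT (n+1), ENNReal.ofReal (∏ i, dirP (n+1) x i ^ (β i - 1))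
      = ENNReal.ofReal ((∏ i, Gamma (β i)) / Gamma (∑ i, β i)) := by
  intro n
  induction n with
  | zero =>
    intro β hβ
    have hT : dirT 1 = Set.univ := by
      ext x
      simp [dirT]
    have h1 : ∀ x : Fin 0 → ℝ, (∏ i, dirP 1 x i ^ (β i - 1)) = 1 := by
      intro x
      rw [Fin.prod_univ_one]
      have : dirP 1 x 0 = 1 := by rw [dirP, dif_neg (by simp)]; simp
      rw [this, Real.one_rpow]
    have hμ : (volume : Measure (Fin 0 → ℝ)) Set.univ = 1 := by
      rw [volume_pi, Measure.pi_univ]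
      simp
    rw [hT, Measure.restrict_univ]
    simp only [h1, ENNReal.ofReal_one]
    rw [lintegral_one, hμ, Fin.prod_univ_one, Fin.sum_univ_one,
      div_self (Real.Gamma_pos_of_pos (hβ 0)).ne']
    simp
  | succ n ih =>
    intro β hβ
    set a := β (Fin.castSucc (Fin.last n)) with ha_def
    set b := β (Fin.last (n+1)) with hb_def
    have ha : 0 < a := hβ _
    have hb : 0 < b := hβ _
    set c : ℝ := Gamma a * Gamma b / Gamma (a + b) with hc_def
    have hc : 0 ≤ c := div_nonneg
      (mul_nonneg (Real.Gamma_pos_of_pos ha).le (Real.Gamma_pos_of_pos hb).le)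
      (Real.Gamma_pos_of_pos (by linarith)).le
    set β' : Fin (n+1) → ℝ :=
      Fin.snoc (fun j : Fin n => β (Fin.castSucc (Fin.castSucc j))) (a + b) with hβ'_def
    have hβ'c : ∀ j : Fin n, β' (Fin.castSucc j) = β (Fin.castSucc (Fin.castSucc j)) :=
      fun j => by rw [hβ'_def, Fin.snoc_castSucc]
    have hβ'l : β' (Fin.last n) = a + b := by rw [hβ'_def, Fin.snoc_last]
    have hβ' : ∀ i, 0 < β' i := by
      intro i
      induction i using Fin.lastCases with
      | last => rw [hβ'l]; linarith
      | cast j => rw [hβ'c]; exact hβ _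
    set F : (Fin (n+1) → ℝ) → ENNReal :=
      fun x => ENNReal.ofReal (∏ i, dirP (n+2) x i ^ (β i - 1)) with hF_def
    have hFmeas : Measurable F := by
      apply ENNReal.measurable_ofReal.comp
      apply Finset.measurable_prod
      intro i _
      have := measurable_dirP (K := n+2) i
      measurability
    set G := (dirT (n+2)).indicator F with hG_def
    have hGmeas : Measurable G := hFmeas.indicator (measurableSet_dirT (n+2))
    set e := MeasurableEquiv.piFinSuccAbove (fun _ : Fin (n+1) => ℝ) (Fin.last n) with he_def
    have mp := (volume_preserving_piFinSuccAbove (fun _ : Fin (n+1) => ℝ) (Fin.last n)).symm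
    -- the inner integral
    have hinner : ∀ z : Fin n → ℝ,
        (∫⁻ t : ℝ, G (Fin.snoc z t))
          = (dirT (n+1)).indicator
              (fun z => ENNReal.ofReal (c * ∏ i, dirP (n+1) z i ^ (β' i - 1))) z := by
      intro z
      by_cases hz : z ∈ dirT (n+1)
      · rw [Set.indicator_of_mem hz]
        set s : ℝ := 1 - ∑ j, z j with hs_def
        have hs : 0 < s := by
          have h2 : (∑ j : Fin n, z j) < 1 := hz.2
          simp only [hs_def]
          linarith
        have hP : 0 ≤ ∏ j, z j ^ (β (Fin.castSucc (Fin.castSucc j)) - 1) :=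
          Finset.prod_nonneg fun j _ => Real.rpow_nonneg (hz.1 j).le _
        have step1 : (fun t : ℝ => G (Fin.snoc z t))
            = fun t => (Set.Ioo 0 s).indicator
                (fun t => ENNReal.ofReal
                  ((∏ j, z j ^ (β (Fin.castSucc (Fin.castSucc j)) - 1))
                    * (t ^ (a - 1) * (s - t) ^ (b - 1)))) t := by
          funext t
          rw [hG_def]
          by_cases ht : t ∈ Set.Ioo 0 s
          · rw [Set.indicator_of_mem ht,
              Set.indicator_of_mem ((snoc_mem_dirT_iff z t).mpr ⟨hz, ht⟩)]
            simp only [hF_def]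
            rw [prod_dirP_snoc β z t]
          · rw [Set.indicator_of_notMem ht, Set.indicator_of_notMem]
            intro hmem
            exact ht ((snoc_mem_dirT_iff z t).mp hmem).2
        rw [step1]
        rw [lintegral_indicator measurableSet_Ioo]
        have step2 : ∀ t : ℝ, ENNReal.ofReal
              ((∏ j, z j ^ (β (Fin.castSucc (Fin.castSucc j)) - 1))
                * (t ^ (a - 1) * (s - t) ^ (b - 1)))
            = ENNReal.ofReal (∏ j, z j ^ (β (Fin.castSucc (Fin.castSucc j)) - 1))
              * ENNReal.ofReal (t ^ (a - 1) * (s - t) ^ (b - 1)) :=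
          fun t => ENNReal.ofReal_mul hP
        simp only [step2]
        rw [lintegral_const_mul' _ _ ENNReal.ofReal_ne_top, beta_lintegral ha hb hs,
          ← ENNReal.ofReal_mul hP]
        congr 1
        rw [Fin.prod_univ_castSucc]
        simp only [hβ'c, hβ'l]
        have hdp : ∀ j : Fin n, dirP (n+1) z (Fin.castSucc j) = z j := dirP_castSucc n z
        simp only [hdp, dirP_last]
        rw [← hs_def, hc_def]
        ring
      · rw [Set.indicator_of_notMem hz]
        have : ∀ t : ℝ, G (Fin.snoc z t) = 0 := by
          intro t
          rw [hG_def, Set.indicator_of_notMem]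
          intro hmem
          exact hz ((snoc_mem_dirT_iff z t).mp hmem).1
        simp only [this]
        exact lintegral_zero
    calc
      ∫⁻ x in dirT (n+2), F x = ∫⁻ x, G x :=
        (lintegral_indicator (measurableSet_dirT (n+2)) F).symm
      _ = ∫⁻ p : ℝ × (Fin n → ℝ), G (e.symm p) := (mp.lintegral_comp hGmeas).symm
      _ = ∫⁻ z : Fin n → ℝ, ∫⁻ t : ℝ, G (e.symm (t, z)) :=
        lintegral_prod_symm _ ((hGmeas.comp e.symm.measurable).aemeasurable)
      _ = ∫⁻ z : Fin n → ℝ, ∫⁻ t : ℝ, G (Fin.snoc z t) := by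
        congr 1
        funext z
        congr 1
        funext t
        congr 1
        rw [he_def, MeasurableEquiv.piFinSuccAbove_symm_apply]
        simp [Fin.insertNthEquiv, Fin.insertNth_last']
      _ = ∫⁻ z : Fin n → ℝ, (dirT (n+1)).indicator
            (fun z => ENNReal.ofReal (c * ∏ i, dirP (n+1) z i ^ (β' i - 1))) z := by
        simp only [hinner]
      _ = ∫⁻ z in dirT (n+1), ENNReal.ofReal (c * ∏ i, dirP (n+1) z i ^ (β' i - 1)) :=
        lintegral_indicator (measurableSet_dirT (n+1)) _
      _ = ENNReal.ofReal c * ∫⁻ z in dirT (n+1),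
            ENNReal.ofReal (∏ i, dirP (n+1) z i ^ (β' i - 1)) := by
        rw [← lintegral_const_mul' _ _ ENNReal.ofReal_ne_top]
        congr 1
        funext z
        rw [ENNReal.ofReal_mul hc]
      _ = ENNReal.ofReal c * ENNReal.ofReal ((∏ i, Gamma (β' i)) / Gamma (∑ i, β' i)) := by
        rw [ih β' hβ']
      _ = ENNReal.ofReal ((∏ i, Gamma (β i)) / Gamma (∑ i, β i)) := by
        rw [← ENNReal.ofReal_mul hc]
        congr 1
        have hsum : (∑ i, β' i) = ∑ i, β i := by
          rw [Fin.sum_univ_castSucc (f := β'), Fin.sum_univ_castSucc (f := β),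
            Fin.sum_univ_castSucc (f := fun j : Fin (n+1) => β (Fin.castSucc j))]
          simp only [hβ'c, hβ'l]
          ring
        have hprod : (∏ i, Gamma (β' i))
            = (∏ j : Fin n, Gamma (β (Fin.castSucc (Fin.castSucc j)))) * Gamma (a + b) := by
          rw [Fin.prod_univ_castSucc (f := fun i => Gamma (β' i))]
          simp only [hβ'c, hβ'l]
        have hprodβ : (∏ i, Gamma (β i))
            = (∏ j : Fin n, Gamma (β (Fin.castSucc (Fin.castSucc j)))) * Gamma a * Gamma b := by
          rw [Fin.prod_univ_castSucc (f := fun i => Gamma (β i)),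
            Fin.prod_univ_castSucc (f := fun j : Fin (n+1) => Gamma (β (Fin.castSucc j)))]
        rw [hsum, hprod, hprodβ, hc_def]
        have hGab : Gamma (a + b) ≠ 0 := (Real.Gamma_pos_of_pos (by linarith)).ne'
        have hGs : Gamma (∑ i : Fin (n+1+1), β i) ≠ 0 :=
          (Real.Gamma_pos_of_pos (Finset.sum_pos (fun i _ => hβ i) Finset.univ_nonempty)).ne'
        field_simp

lemma dirP_prod_measurable {n : ℕ} (β : Fin (n+1) → ℝ) :
    Measurable fun x : Fin n → ℝ => ∏ i, dirP (n+1) x i ^ (β i - 1) := by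
  apply Finset.measurable_prod
  intro i _
  have := measurable_dirP (K := n+1) i
  measurability

lemma dir_integrableOn {n : ℕ} (β : Fin (n+1) → ℝ) (hβ : ∀ i, 0 < β i) :
    IntegrableOn (fun x => ∏ i, dirP (n+1) x i ^ (β i - 1)) (dirT (n+1)) := by
  constructor
  · exact (dirP_prod_measurable β).aestronglyMeasurable
  · rw [hasFiniteIntegral_iff_norm]
    have hle : ∀ᵐ x ∂(volume.restrict (dirT (n+1))),
        ENNReal.ofReal ‖∏ i, dirP (n+1) x i ^ (β i - 1)‖
          = ENNReal.ofReal (∏ i, dirP (n+1) x i ^ (β i - 1)) := by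
      refine (ae_restrict_iff' (measurableSet_dirT (n+1))).mpr ?_
      filter_upwards with x hx
      rw [norm_of_nonneg (Finset.prod_nonneg fun i _ =>
        Real.rpow_nonneg (dirP_pos hx i).le _)]
    rw [lintegral_congr_ae hle, dir_lintegral n β hβ]
    exact ENNReal.ofReal_lt_top

lemma dir_integral {n : ℕ} (β : Fin (n+1) → ℝ) (hβ : ∀ i, 0 < β i) :
    ∫ x in dirT (n+1), ∏ i, dirP (n+1) x i ^ (β i - 1)
      = (∏ i, Gamma (β i)) / Gamma (∑ i, β i) := by
  have hnn : 0 ≤ᵐ[volume.restrict (dirT (n+1))]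
      fun x => ∏ i, dirP (n+1) x i ^ (β i - 1) := by
    refine (ae_restrict_iff' (measurableSet_dirT (n+1))).mpr ?_
    filter_upwards with x hx
    exact Finset.prod_nonneg fun i _ => Real.rpow_nonneg (dirP_pos hx i).le _
  rw [integral_eq_lintegral_of_nonneg_ae hnn
    (dirP_prod_measurable β).aestronglyMeasurable, dir_lintegral n β hβ,
    ENNReal.toReal_ofReal]
  exact div_nonneg (Finset.prod_nonneg fun i _ => (Real.Gamma_pos_of_pos (hβ i)).le)
    (Real.Gamma_pos_of_pos (Finset.sum_pos (fun i _ => hβ i) Finset.univ_nonempty)).le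

lemma quad_simp {m : ℕ} (d ψq : Fin m → ℝ) (ψ0 : ℝ) (h0 : ∑ i, d i = 0) :
    ∑ i, ∑ j, d i * ((if i = j then ψq i else 0) - ψ0) * d j = ∑ i, ψq i * d i ^ 2 := by
  have key : ∀ i, ∑ j, d i * ((if i = j then ψq i else 0) - ψ0) * d j
      = ψq i * d i ^ 2 - d i * ψ0 * ∑ j, d j := by
    intro i
    calc ∑ j, d i * ((if i = j then ψq i else 0) - ψ0) * d j
        = ∑ j, ((if i = j then d i * ψq i * d j else 0) - d i * ψ0 * d j) :=
          Finset.sum_congr rfl fun j _ => by by_cases h : i = j <;> simp [h] <;> ring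
      _ = (∑ j, if i = j then d i * ψq i * d j else 0) - ∑ j, d i * ψ0 * d j :=
          Finset.sum_sub_distrib _ _
      _ = d i * ψq i * d i - d i * ψ0 * ∑ j, d j := by
          rw [Finset.sum_ite_eq Finset.univ i (fun j => d i * ψq i * d j)]
          simp [Finset.mul_sum]
      _ = ψq i * d i ^ 2 - d i * ψ0 * ∑ j, d j := by ring
  calc ∑ i, ∑ j, d i * ((if i = j then ψq i else 0) - ψ0) * d j
      = ∑ i, (ψq i * d i ^ 2 - d i * ψ0 * ∑ j, d j) := Finset.sum_congr rfl fun i _ => key i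
    _ = ∑ i, ψq i * d i ^ 2 := by simp [h0]

lemma Gamma_nat_shift (m : ℕ) {x : ℝ} (hx : 0 < x) :
    Gamma (x + m) = (∏ k ∈ Finset.range m, (x + k)) * Gamma x := by
  induction m with
  | zero => simp
  | succ m ihm =>
    have hxm : x + (m:ℝ) ≠ 0 := by positivity
    rw [show x + ((m+1 : ℕ) : ℝ) = (x + m) + 1 by push_cast; ring,
      Real.Gamma_add_one hxm, ihm, Finset.prod_range_succ]
    ring

lemma dir_moment {n : ℕ} (α : Fin (n+1) → ℝ) (hα : ∀ i, 0 < α i) (i : Fin (n+1)) (m : ℕ) :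
    IntegrableOn (fun x => dirDensity (n+1) α x * dirP (n+1) x i ^ m) (dirT (n+1)) ∧
    ∫ x in dirT (n+1), dirDensity (n+1) α x * dirP (n+1) x i ^ m
      = (∏ k ∈ Finset.range m, (α i + k)) / (∏ k ∈ Finset.range m, ((∑ j, α j) + k)) := by
  set α₀ := ∑ j, α j with hα₀_def
  have hα₀ : 0 < α₀ := Finset.sum_pos (fun j _ => hα j) Finset.univ_nonempty
  set C : ℝ := Gamma α₀ / ∏ j, Gamma (α j) with hC_def
  set β : Fin (n+1) → ℝ := fun k => α k + if k = i then (m:ℝ) else 0 with hβ_def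
  have hβ : ∀ k, 0 < β k := by
    intro k
    rw [hβ_def]
    dsimp only
    split
    · have := hα k
      positivity
    · simpa using hα k
  have hEq : ∀ x ∈ dirT (n+1),
      dirDensity (n+1) α x * dirP (n+1) x i ^ m = C * ∏ k, dirP (n+1) x k ^ (β k - 1) := by
    intro x hx
    have hsplit : ∏ k, dirP (n+1) x k ^ (β k - 1)
        = (∏ k, dirP (n+1) x k ^ (α k - 1)) * dirP (n+1) x i ^ m := by
      have : ∀ k, dirP (n+1) x k ^ (β k - 1)
          = dirP (n+1) x k ^ (α k - 1) * (if k = i then dirP (n+1) x k ^ m else 1) := by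
        intro k
        rw [hβ_def]
        dsimp only
        by_cases hk : k = i
        · rw [if_pos hk, if_pos hk]
          rw [show α k + (m:ℝ) - 1 = (α k - 1) + (m:ℝ) by ring,
            Real.rpow_add (dirP_pos hx k), Real.rpow_natCast]
        · rw [if_neg hk, if_neg hk, add_zero, mul_one]
      rw [Finset.prod_congr rfl (fun k _ => this k), Finset.prod_mul_distrib,
        Finset.prod_ite_eq' Finset.univ i (fun k => dirP (n+1) x k ^ m)]
      simp
    rw [hsplit, dirDensity]
    ring
  have hInt : IntegrableOn (fun x => C * ∏ k, dirP (n+1) x k ^ (β k - 1)) (dirT (n+1)) :=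
    (dir_integrableOn β hβ).const_mul C
  constructor
  · exact hInt.congr_fun (fun x hx => (hEq x hx).symm) (measurableSet_dirT (n+1))
  · rw [setIntegral_congr_fun (measurableSet_dirT (n+1)) hEq, MeasureTheory.integral_const_mul,
      dir_integral β hβ]
    have hsumβ : (∑ k, β k) = α₀ + m := by
      rw [hβ_def, hα₀_def, Finset.sum_add_distrib]
      congr 1
      rw [Finset.sum_ite_eq' Finset.univ i (fun _ => (m:ℝ))]
      simp
    have hprodβ : (∏ k, Gamma (β k))
        = ((∏ k ∈ Finset.range m, (α i + k)) * Gamma (α i)) * ∏ k ∈ Finset.univ.erase i, Gamma (α k) := by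
      rw [← Finset.mul_prod_erase Finset.univ (fun k => Gamma (β k)) (Finset.mem_univ i)]
      congr 1
      · rw [hβ_def]
        dsimp only
        rw [if_pos rfl, Gamma_nat_shift m (hα i)]
      · apply Finset.prod_congr rfl
        intro k hk
        rw [hβ_def]
        dsimp only
        rw [if_neg (Finset.ne_of_mem_erase hk), add_zero]
    have hprodα : (∏ k, Gamma (α k)) = Gamma (α i) * ∏ k ∈ Finset.univ.erase i, Gamma (α k) :=
      (Finset.mul_prod_erase Finset.univ (fun k => Gamma (α k)) (Finset.mem_univ i)).symm
    rw [hsumβ, hprodβ, Gamma_nat_shift m hα₀, hC_def, hprodα]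
    have h1 : Gamma (α i) ≠ 0 := (Real.Gamma_pos_of_pos (hα i)).ne'
    have h2 : Gamma α₀ ≠ 0 := (Real.Gamma_pos_of_pos hα₀).ne'
    have h3 : (∏ k ∈ Finset.univ.erase i, Gamma (α k)) ≠ 0 :=
      Finset.prod_ne_zero_iff.mpr fun k _ => (Real.Gamma_pos_of_pos (hα k)).ne'
    have h4 : (∏ k ∈ Finset.range m, (α₀ + (k:ℝ))) ≠ 0 :=
      Finset.prod_ne_zero_iff.mpr fun k _ => by positivity
    field_simp

end DirichletAuxProof

/-- Closed form of the Fisher-information-weighted MSE loss (𝓘-MSE):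
`E_{p∼Dir(α)}[(y − p)ᵀ 𝓘(α) (y − p)]
  = Σ_j [(y_j − α_j/α₀)² + α_j(α₀ − α_j)/(α₀²(α₀+1))] ψ¹(α_j)`. -/
theorem dirichlet_expected_fim_mse
    (K : ℕ) (hK : 2 ≤ K) (α : Fin K → ℝ) (hα : ∀ i, 0 < α i)
    (y : Fin K → ℝ) (hy : ∑ i, y i = 1) :
    (∫ x in dirT K, dirDensity K α x *
        ∑ i, ∑ j, (y i - dirP K x i) *
          ((if i = j then trigamma (α i) else 0) - trigamma (∑ k, α k)) *
          (y j - dirP K x j))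
      = ∑ j, ((y j - α j / (∑ i, α i)) ^ 2
            + α j * ((∑ i, α i) - α j) / ((∑ i, α i) ^ 2 * ((∑ i, α i) + 1)))
          * trigamma (α j) := by
  obtain ⟨n, rfl⟩ : ∃ n, K = n + 1 := ⟨K - 1, by omega⟩
  set α₀ := ∑ i, α i with hα₀_def
  have hα₀ : 0 < α₀ := Finset.sum_pos (fun j _ => hα j) Finset.univ_nonempty
  have hsum_p : ∀ x : Fin n → ℝ, ∑ i, dirP (n+1) x i = 1 := by
    intro x
    rw [Fin.sum_univ_castSucc (f := fun i => dirP (n+1) x i)]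
    rw [Finset.sum_congr rfl fun j _ => dirP_castSucc n x j, dirP_last]
    ring
  have h0 : ∀ x : Fin n → ℝ, ∑ i, (y i - dirP (n+1) x i) = 0 := by
    intro x
    rw [Finset.sum_sub_distrib, hsum_p x, hy]
    ring
  have hpt : ∀ x : Fin n → ℝ, dirDensity (n+1) α x *
      ∑ i, ∑ j, (y i - dirP (n+1) x i) *
        ((if i = j then trigamma (α i) else 0) - trigamma (∑ k, α k)) *
        (y j - dirP (n+1) x j)
      = ∑ i, trigamma (α i) * (dirDensity (n+1) α x * (y i - dirP (n+1) x i) ^ 2) := by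
    intro x
    rw [quad_simp (fun i => y i - dirP (n+1) x i) (fun i => trigamma (α i)) _ (h0 x)]
    rw [Finset.mul_sum]
    exact Finset.sum_congr rfl fun i _ => by ring
  -- pointwise expansion of the square
  have hsq : ∀ (i : Fin (n+1)) (x : Fin n → ℝ),
      dirDensity (n+1) α x * (y i - dirP (n+1) x i) ^ 2
        = y i ^ 2 * (dirDensity (n+1) α x * dirP (n+1) x i ^ 0)
          - 2 * y i * (dirDensity (n+1) α x * dirP (n+1) x i ^ 1)
          + dirDensity (n+1) α x * dirP (n+1) x i ^ 2 := by
    intro i x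
    ring
  have hIntSq : ∀ i : Fin (n+1),
      IntegrableOn (fun x => dirDensity (n+1) α x * (y i - dirP (n+1) x i) ^ 2)
        (dirT (n+1)) := by
    intro i
    have hA : IntegrableOn
        (fun x => y i ^ 2 * (dirDensity (n+1) α x * dirP (n+1) x i ^ 0)) (dirT (n+1)) :=
      (dir_moment α hα i 0).1.const_mul _
    have hB : IntegrableOn
        (fun x => 2 * y i * (dirDensity (n+1) α x * dirP (n+1) x i ^ 1)) (dirT (n+1)) :=
      (dir_moment α hα i 1).1.const_mul _
    have hC := (dir_moment α hα i 2).1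
    have h02 : IntegrableOn
        (fun x => y i ^ 2 * (dirDensity (n+1) α x * dirP (n+1) x i ^ 0)
          - 2 * y i * (dirDensity (n+1) α x * dirP (n+1) x i ^ 1)
          + dirDensity (n+1) α x * dirP (n+1) x i ^ 2) (dirT (n+1)) :=
      (hA.sub hB).add hC
    exact h02.congr_fun (fun x _ => (hsq i x).symm) (measurableSet_dirT (n+1))
  have hval : ∀ i : Fin (n+1),
      ∫ x in dirT (n+1), dirDensity (n+1) α x * (y i - dirP (n+1) x i) ^ 2
        = (y i - α i / α₀) ^ 2 + α i * (α₀ - α i) / (α₀ ^ 2 * (α₀ + 1)) := by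
    intro i
    rw [setIntegral_congr_fun (measurableSet_dirT (n+1)) (fun x _ => hsq i x)]
    have hA : IntegrableOn
        (fun x => y i ^ 2 * (dirDensity (n+1) α x * dirP (n+1) x i ^ 0)) (dirT (n+1)) :=
      (dir_moment α hα i 0).1.const_mul _
    have hB : IntegrableOn
        (fun x => 2 * y i * (dirDensity (n+1) α x * dirP (n+1) x i ^ 1)) (dirT (n+1)) :=
      (dir_moment α hα i 1).1.const_mul _
    have hC := (dir_moment α hα i 2).1
    have hAB : IntegrableOn
        (fun x => y i ^ 2 * (dirDensity (n+1) α x * dirP (n+1) x i ^ 0)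
          - 2 * y i * (dirDensity (n+1) α x * dirP (n+1) x i ^ 1)) (dirT (n+1)) :=
      hA.sub hB
    rw [integral_add hAB hC, integral_sub hA hB,
      MeasureTheory.integral_const_mul, MeasureTheory.integral_const_mul,
      (dir_moment α hα i 0).2, (dir_moment α hα i 1).2, (dir_moment α hα i 2).2]
    simp only [Finset.prod_range_succ, Finset.prod_range_zero, Finset.prod_range_one]
    rw [← hα₀_def]
    push_cast
    have h1 : α₀ ≠ 0 := hα₀.ne'
    have h2 : α₀ + 1 ≠ 0 := by positivity
    field_simp
    ring
  calc (∫ x in dirT (n+1), dirDensity (n+1) α x *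
        ∑ i, ∑ j, (y i - dirP (n+1) x i) *
          ((if i = j then trigamma (α i) else 0) - trigamma (∑ k, α k)) *
          (y j - dirP (n+1) x j))
      = ∫ x in dirT (n+1), ∑ i, trigamma (α i) *
          (dirDensity (n+1) α x * (y i - dirP (n+1) x i) ^ 2) := by
        exact setIntegral_congr_fun (measurableSet_dirT (n+1)) (fun x _ => hpt x)
    _ = ∑ i, ∫ x in dirT (n+1), trigamma (α i) *
          (dirDensity (n+1) α x * (y i - dirP (n+1) x i) ^ 2) :=
        integral_finset_sum _ (fun i _ => (hIntSq i).const_mul _)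
    _ = ∑ i, trigamma (α i) * ∫ x in dirT (n+1),
          dirDensity (n+1) α x * (y i - dirP (n+1) x i) ^ 2 := by
        exact Finset.sum_congr rfl fun i _ => MeasureTheory.integral_const_mul _ _
    _ = ∑ j, ((y j - α j / α₀) ^ 2 + α j * (α₀ - α j) / (α₀ ^ 2 * (α₀ + 1)))
          * trigamma (α j) := by
        exact Finset.sum_congr rfl fun i _ => by rw [hval i]; ring
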